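/- Let κ be a regular uncountable cardinal and ⟨λ_j : j < κ⟩ a sequence of nonzero ordinals, and let the levels 𝒯_i (i < κ) of the tree 𝒯 be defined as in the context. Then the tree (𝒯, ⊴) has no κ-branch: there is no sequence ⟨η_i : i < κ⟩ such that η_i ∈ 𝒯_i for all i < κ and η_i = η_j ↾ (i+1) whenever i < j < κ. -/

import Mathlib

open Cardinal

/-- `η` (a function recording the pairs `η(j) = (η(j,1), η(j,2))` for `j ≤ i`; values
beyond `i` are irrelevant) is a node of the `i`-th level `𝒯_i` of the tree `𝒯`:
(c) `η(j,1) < λ_j` and `η(j,2) < κ` for `j ≤ i`;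
(d) both coordinates are nondecreasing on `j ≤ i`;
(e) `η` has finitely many values on `j ≤ i`;
(f) if `j₁ < j₂ ≤ i` and the first coordinate is constant on `[j₁, j₂]`, then
    `j₂ < η(j₁,2)`. -/
def InLevel (lam : Ordinal → Ordinal) (κ i : Ordinal)
    (η : Ordinal → Ordinal × Ordinal) : Prop :=
  (∀ j ≤ i, (η j).1 < lam j ∧ (η j).2 < κ) ∧
  (∀ j₁ j₂ : Ordinal, j₁ < j₂ → j₂ ≤ i → (η j₁).1 ≤ (η j₂).1 ∧ (η j₁).2 ≤ (η j₂).2) ∧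
  (η '' Set.Iic i).Finite ∧
  (∀ j₁ j₂ : Ordinal, j₁ < j₂ → j₂ ≤ i →
    (∀ j, j₁ ≤ j → j ≤ j₂ → (η j).1 = (η j₁).1) → j₂ < (η j₁).2)

/-- **The tree `𝒯` has no `κ`-branch** (Claim 2.7 of the paper):
for a regular uncountable cardinal `κ` and nonzero ordinals `⟨λ_j : j < κ⟩`, there is
no sequence `⟨η_i : i < κ⟩` with `η_i ∈ 𝒯_i` which is coherent under restriction. -/
theorem stmt5 (κ : Cardinal) (hκreg : κ.IsRegular) (hκunc : ℵ₀ < κ)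
    (lam : Ordinal → Ordinal) (hlam : ∀ j < κ.ord, lam j ≠ 0) :
    ¬ ∃ η : Ordinal → Ordinal → Ordinal × Ordinal,
        (∀ i < κ.ord, InLevel lam κ.ord i (η i)) ∧
        (∀ i j : Ordinal, i < j → j < κ.ord → ∀ k ≤ i, η j k = η i k) := by
  rintro ⟨η, hlev, hcoh⟩
  set F : Ordinal → Ordinal × Ordinal := fun k => η k k with hF
  have hord_lim : Order.IsSuccLimit κ.ord := Cardinal.isSuccLimit_ord hκreg.aleph0_le
  have h0 : (0 : Ordinal) < κ.ord := hord_lim.pos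
  -- coherence: η i k = F k for k ≤ i < κ.ord
  have hFk : ∀ i < κ.ord, ∀ k ≤ i, η i k = F k := by
    intro i hi k hk
    rcases eq_or_lt_of_le hk with rfl | hk
    · rfl
    · exact hcoh k i hk hi k le_rfl
  -- monotonicity of first coordinate of F
  have hmono : ∀ j₁ j₂ : Ordinal, j₁ < j₂ → j₂ < κ.ord → (F j₁).1 ≤ (F j₂).1 := by
    intro j₁ j₂ h12 h2
    have hd := (hlev j₂ h2).2.1 j₁ j₂ h12 le_rfl
    rw [hFk j₂ h2 j₁ h12.le] at hd
    exact hd.1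
  -- first coordinate is eventually constant
  have hev : ∃ j₁ < κ.ord, ∀ j, j₁ ≤ j → j < κ.ord → (F j).1 = (F j₁).1 := by
    by_contra hne
    push_neg at hne
    have step : ∀ i < κ.ord, ∃ j, j < κ.ord ∧ i < j ∧ (F i).1 < (F j).1 := by
      intro i hi
      obtain ⟨j, hij, hj, hne'⟩ := hne i hi
      have hij' : i < j := lt_of_le_of_ne hij (by rintro rfl; exact hne' rfl)
      exact ⟨j, hj, hij', lt_of_le_of_ne (hmono i j hij' hj) (Ne.symm hne')⟩
    -- build an increasing ω-sequence
    choose! g hg1 hg2 hg3 using step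
    let u : ℕ → Ordinal := fun n => Nat.rec 0 (fun _ x => g x) n
    have hu : ∀ n, u n < κ.ord ∧ u n < u (n + 1) ∧ (F (u n)).1 < (F (u (n + 1))).1 := by
      intro n
      induction n with
      | zero => exact ⟨h0, hg2 0 h0, hg3 0 h0⟩
      | succ n ih =>
        have h' : u (n + 1) < κ.ord := hg1 (u n) ih.1
        exact ⟨h', hg2 _ h', hg3 _ h'⟩
    set s := iSup u with hs
    have hsκ : s < κ.ord := by
      rw [hs]
      apply Ordinal.iSup_lt_ord_lift _ (fun n => (hu n).1)
      rw [Cardinal.mk_nat, Cardinal.lift_aleph0, hκreg.cof_eq]; exact hκunc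
    have hus : ∀ n, u n ≤ s := fun n => Ordinal.le_iSup u n
    have hfin := (hlev s hsκ).2.2.1
    have hFinj : Function.Injective (fun n => (F (u n)).1) := by
      have : StrictMono (fun n => (F (u n)).1) :=
        strictMono_nat_of_lt_succ (fun n => (hu n).2.2)
      exact this.injective
    apply Set.not_infinite.2 hfin
    apply Set.infinite_of_injective_forall_mem (f := fun n => η s (u n))
    · intro a b hab
      apply hFinj
      simp only at hab ⊢
      rw [← hFk s hsκ (u a) (hus a), ← hFk s hsκ (u b) (hus b), hab]
    · intro n
      exact Set.mem_image_of_mem _ (hus n)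
  -- now derive a contradiction
  obtain ⟨j₁, hj₁, hconst⟩ := hev
  have hj₁2 : (F j₁).2 < κ.ord := ((hlev j₁ hj₁).1 j₁ le_rfl).2
  set j₂ := max (j₁ + 1) (F j₁).2 with hj₂def
  have hj₂κ : j₂ < κ.ord := max_lt (hord_lim.succ_lt hj₁) hj₁2
  have h12 : j₁ < j₂ := lt_of_lt_of_le (Order.lt_succ j₁) (le_max_left _ _)
  have hf := (hlev j₂ hj₂κ).2.2.2 j₁ j₂ h12 le_rfl ?_
  · rw [hFk j₂ hj₂κ j₁ h12.le] at hf
    exact absurd hf (not_lt.2 (le_max_right _ _))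
  · intro j hj1j hjj2
    have hjκ : j < κ.ord := lt_of_le_of_lt hjj2 hj₂κ
    rw [hFk j₂ hj₂κ j hjj2, hFk j₂ hj₂κ j₁ h12.le]
    exact hconst j hj1j hjκ
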